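/- For every k ≥ 1 and n > 3k + √(2k² - k), the complement of any k-regular graph on n vertices is not clique-Helly. -/

import Mathlib

open SimpleGraph

/-- A maximal clique of a simple graph. -/
def IsMaxClique {V : Type*} (G : SimpleGraph V) (s : Set V) : Prop :=
  G.IsClique s ∧ ∀ t : Set V, G.IsClique t → s ⊆ t → s = t

/-- A graph is clique-Helly if every nonempty pairwise intersecting family of
maximal cliques has a common vertex. -/
def CliqueHelly {V : Type*} (G : SimpleGraph V) : Prop :=
  ∀ F : Set (Set V), (∀ s ∈ F, IsMaxClique G s) →
    (∀ s ∈ F, ∀ t ∈ F, (s ∩ t).Nonempty) → F.Nonempty → (⋂₀ F).Nonempty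

/-- In a finite graph, every clique extends to a maximal clique. -/
lemma exists_isMaxClique_superset {V : Type*} [Fintype V] (H : SimpleGraph V)
    (s : Set V) (hs : H.IsClique s) : ∃ t : Set V, IsMaxClique H t ∧ s ⊆ t := by
  classical
  set F0 : Finset (Finset V) :=
    Finset.univ.filter (fun t : Finset V => H.IsClique (t : Set V) ∧ s ⊆ (t : Set V)) with hF0
  have hne : F0.Nonempty := by
    refine ⟨(Set.toFinite s).toFinset, ?_⟩
    simp only [hF0, Finset.mem_filter, Finset.mem_univ, true_and, Set.Finite.coe_toFinset]
    exact ⟨hs, subset_rfl⟩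
  obtain ⟨t, htF, hmax⟩ := F0.exists_max_image (fun t => t.card) hne
  have ht' : H.IsClique (t : Set V) ∧ s ⊆ (t : Set V) := by
    simpa only [hF0, Finset.mem_filter, Finset.mem_univ, true_and] using htF
  refine ⟨(t : Set V), ⟨ht'.1, ?_⟩, ht'.2⟩
  intro t' hclique hsub
  have hfin : t'.Finite := Set.toFinite t'
  have hmem : hfin.toFinset ∈ F0 := by
    simp only [hF0, Finset.mem_filter, Finset.mem_univ, true_and, Set.Finite.coe_toFinset]
    exact ⟨hclique, ht'.2.trans hsub⟩
  have hcard := hmax _ hmem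
  have hsub2 : t ⊆ hfin.toFinset := by
    intro x hx
    rw [Set.Finite.mem_toFinset]
    exact hsub hx
  have heq := Finset.eq_of_subset_of_card_le hsub2 hcard
  rw [← hfin.coe_toFinset, ← heq]

theorem main_theorem_not_helly
    (k n : ℕ) (hk : 1 ≤ k)
    (hn : (n : ℝ) > 3 * k + Real.sqrt (2 * k ^ 2 - k))
    {V : Type*} [Fintype V] (G : SimpleGraph V) [DecidableRel G.Adj]
    (hcard : Fintype.card V = n) (hreg : G.IsRegularOfDegree k) :
    ¬ CliqueHelly Gᶜ := by
  classical
  intro hH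
  -- Step 0: numeric bound : n ≥ 4k + 1
  have hk1 : (1 : ℝ) ≤ (k : ℝ) := by exact_mod_cast hk
  have hsqrt : (k : ℝ) ≤ Real.sqrt (2 * (k : ℝ) ^ 2 - k) :=
    Real.le_sqrt_of_sq_le (by nlinarith)
  have hn4R : (4 * k : ℝ) < (n : ℝ) := by
    have : (3 * k : ℝ) + (k : ℝ) ≤ 3 * k + Real.sqrt (2 * (k : ℝ) ^ 2 - k) := by linarith
    push_cast at hn ⊢
    linarith
  have hn4 : 4 * k + 1 ≤ n := by
    have : (4 * k : ℕ) < n := by exact_mod_cast hn4R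
    omega
  -- Step 1: a nonadjacent pair with distinct neighborhoods
  obtain ⟨a, b, hne_ab, hnadj, hNne⟩ :
      ∃ a b : V, a ≠ b ∧ ¬ G.Adj a b ∧ G.neighborFinset a ≠ G.neighborFinset b := by
    by_contra hcon
    push_neg at hcon
    have hpos : 0 < Fintype.card V := by omega
    obtain ⟨a⟩ := Fintype.card_pos_iff.mp hpos
    have hdeg : (G.neighborFinset a).card = k := hreg a
    obtain ⟨u, hu⟩ : (G.neighborFinset a).Nonempty := Finset.card_pos.mp (by omega)
    have hadj_au : G.Adj a u := by rwa [SimpleGraph.mem_neighborFinset] at hu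
    have hsub : insert a (Finset.univ \ insert a (G.neighborFinset a)) ⊆
        G.neighborFinset u := by
      intro c hc
      rcases Finset.mem_insert.mp hc with rfl | hc
      · rw [SimpleGraph.mem_neighborFinset]
        exact hadj_au.symm
      · rw [Finset.mem_sdiff, Finset.mem_insert] at hc
        push_neg at hc
        obtain ⟨-, hca, hcnb⟩ := hc
        have hcnadj : ¬ G.Adj c a := by
          intro h
          exact hcnb (by rwa [SimpleGraph.mem_neighborFinset, G.adj_comm])
        have := hcon c a hca hcnadj
        rw [SimpleGraph.mem_neighborFinset, G.adj_comm]
        have : u ∈ G.neighborFinset c := this ▸ hu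
        rwa [SimpleGraph.mem_neighborFinset] at this
    have hcard1 : (insert a (Finset.univ \ insert a (G.neighborFinset a))).card
        = 1 + (n - (k + 1)) := by
      have hanot : a ∉ Finset.univ \ insert a (G.neighborFinset a) := by
        simp
      rw [Finset.card_insert_of_notMem hanot, Finset.card_sdiff_of_subset (Finset.subset_univ _)]
      have hains : a ∉ G.neighborFinset a := by
        simp
      rw [Finset.card_insert_of_notMem hains, hdeg, Finset.card_univ, hcard]
      omega
    have hle := Finset.card_le_card hsub
    have hdegu : (G.neighborFinset u).card = k := hreg u
    rw [hcard1, hdegu] at hle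
    omega
  -- notation
  set A := G.neighborFinset a with hA
  set Bb := G.neighborFinset b with hBb
  have hAcard : A.card = k := hreg a
  have hBcard : Bb.card = k := hreg b
  set I := A ∩ Bb with hI
  -- Step 2 : |I| ≤ k - 1
  have hIk : I.card + 1 ≤ k := by
    by_contra hcon
    push_neg at hcon
    have hIA : I ⊆ A := Finset.inter_subset_left
    have h1 : I.card ≤ k := hAcard ▸ Finset.card_le_card hIA
    have h2 : A.card ≤ I.card := by omega
    have h3 : I = A := (Finset.eq_of_subset_of_card_le hIA h2).symm ▸ rfl
    have h4 : A ⊆ Bb := by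
      rw [← Finset.eq_of_subset_of_card_le hIA h2]
      exact Finset.inter_subset_right
    exact hNne (Finset.eq_of_subset_of_card_le h4 (by omega))
  set Ba : Finset V := insert a A with hBa
  set Bb' : Finset V := insert b Bb with hBb'
  set Un : Finset V := (A ∪ Bb) \ I with hUn
  set C : Finset V := Finset.univ \ (Ba ∪ Bb') with hC
  -- card facts
  have hBaBbInter : Ba ∩ Bb' = I := by
    ext x
    simp only [hBa, hBb', hI, Finset.mem_inter, Finset.mem_insert,
      SimpleGraph.mem_neighborFinset, hA, hBb]
    constructor
    · rintro ⟨h1 | h1, h2 | h2⟩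
      · exact absurd (h1.symm.trans h2) hne_ab
      · rw [h1] at h2; exact absurd h2.symm hnadj
      · rw [h2] at h1; exact absurd h1 hnadj
      · exact ⟨h1, h2⟩
    · rintro ⟨h1, h2⟩
      exact ⟨Or.inr h1, Or.inr h2⟩
  have hBacard : Ba.card = k + 1 := by
    rw [hBa, Finset.card_insert_of_notMem (by simp [hA]), hAcard]
  have hBb'card : Bb'.card = k + 1 := by
    rw [hBb', Finset.card_insert_of_notMem (by simp [hBb]), hBcard]
  have hUnion : (Ba ∪ Bb').card + I.card = 2 * k + 2 := by
    have := Finset.card_union_add_card_inter Ba Bb'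
    rw [hBaBbInter, hBacard, hBb'card] at this
    omega
  have hUnCard : Un.card + 2 * I.card = 2 * k := by
    have h1 : I ⊆ A ∪ Bb := Finset.inter_subset_left.trans Finset.subset_union_left
    have h2 := Finset.card_sdiff_add_card_eq_card h1
    have h3 := Finset.card_union_add_card_inter A Bb
    rw [hAcard, hBcard, ← hI] at h3
    rw [hUn] at *
    omega
  have hCcard : C.card + (Ba ∪ Bb').card = n := by
    have := Finset.card_sdiff_add_card_eq_card (Finset.subset_univ (Ba ∪ Bb'))
    rw [Finset.card_univ, hcard] at this
    exact this
  -- basic memberships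
  have haC : a ∉ C := by
    simp only [hC, Finset.mem_sdiff, Finset.mem_univ, true_and, not_not]
    exact Finset.mem_union_left _ (Finset.mem_insert_self a A)
  have hbC : b ∉ C := by
    simp only [hC, Finset.mem_sdiff, Finset.mem_univ, true_and, not_not]
    exact Finset.mem_union_right _ (Finset.mem_insert_self b Bb)
  -- Step 3 : key counting bound for each c ∈ C
  have hmain : ∀ c ∈ C, k - I.card ≤ (Un ∩ G.neighborFinset c).card := by
    intro c hc
    rw [hC, Finset.mem_sdiff, Finset.mem_union] at hc
    obtain ⟨-, hcnot⟩ := hc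
    have hca : c ≠ a := by
      intro h; exact hcnot (Or.inl (h ▸ Finset.mem_insert_self a A))
    have hac : ¬ G.Adj a c := by
      intro h
      exact hcnot (Or.inl (Finset.mem_insert_of_mem (by rwa [hA, SimpleGraph.mem_neighborFinset])))
    have hcb : c ≠ b := by
      intro h; exact hcnot (Or.inr (h ▸ Finset.mem_insert_self b Bb))
    have hbc : ¬ G.Adj b c := by
      intro h
      exact hcnot (Or.inr (Finset.mem_insert_of_mem (by rwa [hBb, SimpleGraph.mem_neighborFinset])))
    -- the three compl-adjacencies
    have hab' : Gᶜ.Adj a b := by rw [SimpleGraph.compl_adj]; exact ⟨hne_ab, hnadj⟩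
    have hac' : Gᶜ.Adj a c := by rw [SimpleGraph.compl_adj]; exact ⟨Ne.symm hca, hac⟩
    have hbc' : Gᶜ.Adj b c := by rw [SimpleGraph.compl_adj]; exact ⟨Ne.symm hcb, hbc⟩
    -- the family of maximal cliques containing at least two of {a,b,c}
    set F : Set (Set V) := {D | IsMaxClique Gᶜ D ∧
      ((a ∈ D ∧ b ∈ D) ∨ (a ∈ D ∧ c ∈ D) ∨ (b ∈ D ∧ c ∈ D))} with hF
    have hFmax : ∀ s ∈ F, IsMaxClique Gᶜ s := fun s hs => hs.1
    have hFpair : ∀ s ∈ F, ∀ t ∈ F, (s ∩ t).Nonempty := by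
      intro s hs t ht
      obtain ⟨-, hs2⟩ := hs
      obtain ⟨-, ht2⟩ := ht
      rcases hs2 with ⟨h1, h2⟩ | ⟨h1, h2⟩ | ⟨h1, h2⟩ <;>
        rcases ht2 with ⟨g1, g2⟩ | ⟨g1, g2⟩ | ⟨g1, g2⟩ <;>
        first
          | exact ⟨a, h1, g1⟩
          | exact ⟨b, h2, g2⟩
          | exact ⟨b, h2, g1⟩
          | exact ⟨b, h1, g2⟩
          | exact ⟨b, h1, g1⟩
          | exact ⟨c, h2, g2⟩
          | exact ⟨c, h2, g1⟩
          | exact ⟨c, h1, g2⟩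
          | exact ⟨a, h1, g2⟩
          | exact ⟨a, h2, g1⟩
    have hclq0 : Gᶜ.IsClique {a, b, c} := by
      intro x hx y hy hxy
      simp only [Set.mem_insert_iff, Set.mem_singleton_iff] at hx hy
      rcases hx with rfl | rfl | rfl <;> rcases hy with rfl | rfl | rfl <;>
        first
          | exact absurd rfl hxy
          | exact hab'
          | exact hab'.symm
          | exact hac'
          | exact hac'.symm
          | exact hbc'
          | exact hbc'.symm
    have hFne : F.Nonempty := by
      obtain ⟨D, hD, hsubD⟩ := exists_isMaxClique_superset Gᶜ {a, b, c} hclq0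
      exact ⟨D, hD, Or.inl ⟨hsubD (by simp), hsubD (by simp)⟩⟩
    obtain ⟨w, hw⟩ := hH F hFmax hFpair hFne
    rw [Set.mem_sInter] at hw
    -- the key step : every G-neighbor of w conflicts with two of {a,b,c}
    have step : ∀ x y : V, Gᶜ.Adj x y →
        (∀ D : Set V, x ∈ D → y ∈ D →
          ((a ∈ D ∧ b ∈ D) ∨ (a ∈ D ∧ c ∈ D) ∨ (b ∈ D ∧ c ∈ D))) →
        ∀ u : V, G.Adj w u → ¬ (Gᶜ.Adj u x ∧ Gᶜ.Adj u y) := by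
      rintro x y hxy hcond u hwu ⟨hux, huy⟩
      have hclq : Gᶜ.IsClique {x, y, u} := by
        intro p hp q hq hpq
        simp only [Set.mem_insert_iff, Set.mem_singleton_iff] at hp hq
        rcases hp with rfl | rfl | rfl <;> rcases hq with rfl | rfl | rfl <;>
          first
            | exact absurd rfl hpq
            | exact hxy
            | exact hxy.symm
            | exact hux
            | exact hux.symm
            | exact huy
            | exact huy.symm
      obtain ⟨D, hD, hsubD⟩ := exists_isMaxClique_superset Gᶜ {x, y, u} hclq
      have hDF : D ∈ F := ⟨hD, hcond D (hsubD (by simp)) (hsubD (by simp))⟩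
      have hwD : w ∈ D := hw D hDF
      have huD : u ∈ D := hsubD (by simp)
      by_cases hwe : w = u
      · subst hwe
        exact G.loopless.irrefl w hwu
      · have hadj := hD.1 hwD huD hwe
        rw [SimpleGraph.compl_adj] at hadj
        exact hadj.2 hwu
    have h1 := step a b hab' (fun D hx hy => Or.inl ⟨hx, hy⟩)
    have h2 := step a c hac' (fun D hx hy => Or.inr (Or.inl ⟨hx, hy⟩))
    have h3 := step b c hbc' (fun D hx hy => Or.inr (Or.inr ⟨hx, hy⟩))
    -- neighbors of w outside I lie in Un ∩ N(c)
    have hsubset : G.neighborFinset w \ I ⊆ Un ∩ G.neighborFinset c := by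
      intro u hu
      rw [Finset.mem_sdiff, SimpleGraph.mem_neighborFinset] at hu
      obtain ⟨hwu, hnotI⟩ := hu
      have hnotI' : ¬ (G.Adj a u ∧ G.Adj b u) := by
        intro h
        exact hnotI (by
          rw [hI, Finset.mem_inter, hA, hBb, SimpleGraph.mem_neighborFinset,
            SimpleGraph.mem_neighborFinset]
          exact h)
      have c1 : (u = a ∨ G.Adj u a) ∨ (u = b ∨ G.Adj u b) := by
        by_contra hcon
        push_neg at hcon
        exact h1 u hwu ⟨by rw [SimpleGraph.compl_adj]; exact ⟨hcon.1.1, hcon.1.2⟩,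
          by rw [SimpleGraph.compl_adj]; exact ⟨hcon.2.1, hcon.2.2⟩⟩
      have c2 : (u = a ∨ G.Adj u a) ∨ (u = c ∨ G.Adj u c) := by
        by_contra hcon
        push_neg at hcon
        exact h2 u hwu ⟨by rw [SimpleGraph.compl_adj]; exact ⟨hcon.1.1, hcon.1.2⟩,
          by rw [SimpleGraph.compl_adj]; exact ⟨hcon.2.1, hcon.2.2⟩⟩
      have c3 : (u = b ∨ G.Adj u b) ∨ (u = c ∨ G.Adj u c) := by
        by_contra hcon
        push_neg at hcon
        exact h3 u hwu ⟨by rw [SimpleGraph.compl_adj]; exact ⟨hcon.1.1, hcon.1.2⟩,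
          by rw [SimpleGraph.compl_adj]; exact ⟨hcon.2.1, hcon.2.2⟩⟩
      -- now case analysis to show u ∈ A ∪ Bb, u ∉ I, G.Adj u c
      have hres : (u ∈ A ∪ Bb) ∧ G.Adj u c := by
        rcases c1 with (hua' | hua) | (hub' | hub)
        · exfalso
          rcases c3 with (h | h) | (h | h)
          · exact hne_ab (hua'.symm.trans h)
          · rw [hua'] at h; exact hnadj h
          · exact hca (h.symm.trans hua')
          · rw [hua'] at h; exact hac h
        · have huA : u ∈ A := by rw [hA, SimpleGraph.mem_neighborFinset]; exact hua.symm
          rcases c3 with (h | h) | (h | h)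
          · rw [h] at hua; exact absurd hua.symm hnadj
          · exact absurd ⟨hua.symm, h.symm⟩ hnotI'
          · rw [h] at hua; exact absurd hua.symm hac
          · exact ⟨Finset.mem_union_left _ huA, h⟩
        · exfalso
          rcases c2 with (h | h) | (h | h)
          · exact hne_ab (h.symm.trans hub')
          · rw [hub'] at h; exact hnadj h.symm
          · exact hcb (h.symm.trans hub')
          · rw [hub'] at h; exact hbc h
        · have huB : u ∈ Bb := by rw [hBb, SimpleGraph.mem_neighborFinset]; exact hub.symm
          rcases c2 with (h | h) | (h | h)
          · rw [h] at hub; exact absurd hub hnadj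
          · exact absurd ⟨h.symm, hub.symm⟩ hnotI'
          · rw [h] at hub; exact absurd hub.symm hbc
          · exact ⟨Finset.mem_union_right _ huB, h⟩
      rw [Finset.mem_inter, hUn, Finset.mem_sdiff, SimpleGraph.mem_neighborFinset]
      exact ⟨⟨hres.1, hnotI⟩, hres.2.symm⟩
    have hle1 : k - I.card ≤ (G.neighborFinset w \ I).card := by
      have := Finset.le_card_sdiff I (G.neighborFinset w)
      have hdw : (G.neighborFinset w).card = k := hreg w
      rwa [hdw] at this
    exact hle1.trans (Finset.card_le_card hsubset)
  -- Step 4 : double counting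
  have hsum1 : C.card * (k - I.card) ≤ ∑ c ∈ C, (Un ∩ G.neighborFinset c).card := by
    have := Finset.card_nsmul_le_sum C (fun c => (Un ∩ G.neighborFinset c).card)
      (k - I.card) hmain
    simpa [smul_eq_mul] using this
  have hswap : ∑ c ∈ C, (Un ∩ G.neighborFinset c).card
      = ∑ u ∈ Un, (C ∩ G.neighborFinset u).card := by
    have e1 : ∀ c : V, (Un ∩ G.neighborFinset c).card
        = ∑ u ∈ Un, (if G.Adj c u then 1 else 0) := by
      intro c
      rw [← Finset.card_filter]
      congr 1
      ext u
      simp [SimpleGraph.mem_neighborFinset]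
    have e2 : ∀ u : V, (C ∩ G.neighborFinset u).card
        = ∑ c ∈ C, (if G.Adj c u then 1 else 0) := by
      intro u
      rw [← Finset.card_filter]
      congr 1
      ext c
      simp [SimpleGraph.mem_neighborFinset, G.adj_comm]
    rw [Finset.sum_congr rfl (fun c _ => e1 c), Finset.sum_comm,
      ← Finset.sum_congr rfl (fun u _ => e2 u)]
  have hsum2 : ∑ u ∈ Un, (C ∩ G.neighborFinset u).card ≤ Un.card * (k - 1) := by
    have hbound : ∀ u ∈ Un, (C ∩ G.neighborFinset u).card ≤ k - 1 := by
      intro u hu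
      rw [hUn, Finset.mem_sdiff, Finset.mem_union] at hu
      obtain ⟨hu1, -⟩ := hu
      rcases hu1 with huA | huB
      · have haNu : a ∈ G.neighborFinset u := by
          rw [SimpleGraph.mem_neighborFinset]
          rw [hA, SimpleGraph.mem_neighborFinset] at huA
          exact huA.symm
        have hsub : C ∩ G.neighborFinset u ⊆ G.neighborFinset u \ {a} := by
          intro x hx
          rw [Finset.mem_inter] at hx
          rw [Finset.mem_sdiff, Finset.mem_singleton]
          exact ⟨hx.2, fun h => haC (h ▸ hx.1)⟩
        have := Finset.card_le_card hsub
        have hdu : (G.neighborFinset u).card = k := hreg u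
        rwa [Finset.card_sdiff_of_subset (Finset.singleton_subset_iff.mpr haNu),
          Finset.card_singleton, hdu] at this
      · have hbNu : b ∈ G.neighborFinset u := by
          rw [SimpleGraph.mem_neighborFinset]
          rw [hBb, SimpleGraph.mem_neighborFinset] at huB
          exact huB.symm
        have hsub : C ∩ G.neighborFinset u ⊆ G.neighborFinset u \ {b} := by
          intro x hx
          rw [Finset.mem_inter] at hx
          rw [Finset.mem_sdiff, Finset.mem_singleton]
          exact ⟨hx.2, fun h => hbC (h ▸ hx.1)⟩
        have := Finset.card_le_card hsub
        have hdu : (G.neighborFinset u).card = k := hreg u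
        rwa [Finset.card_sdiff_of_subset (Finset.singleton_subset_iff.mpr hbNu),
          Finset.card_singleton, hdu] at this
    have := Finset.sum_le_card_nsmul Un (fun u => (C ∩ G.neighborFinset u).card)
      (k - 1) hbound
    simpa [smul_eq_mul] using this
  -- Step 5 : conclude
  have hUn2 : Un.card = 2 * (k - I.card) := by omega
  have htot : C.card * (k - I.card) ≤ (2 * (k - 1)) * (k - I.card) := by
    have h := hsum1.trans (hswap ▸ hsum2)
    rw [hUn2] at h
    calc C.card * (k - I.card) ≤ 2 * (k - I.card) * (k - 1) := h
      _ = (2 * (k - 1)) * (k - I.card) := by ring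
  have hCle : C.card ≤ 2 * (k - 1) :=
    Nat.le_of_mul_le_mul_right htot (by omega)
  omega
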